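/- Let f ∈ 𝓑 and suppose 0 < α_1 ≤ α_2 ≤ … ≤ α_k are roots of f, counted with multiplicity. Then ∏_{i=1}^k α_i ≥ (1 + 1/k)^{−k/2} (χ²k + 1)^{−1/2}. -/

import Mathlib

open MeasureTheory Filter Set
open scoped ENNReal Topology

noncomputable section

/-- Evaluation of the power series with coefficient sequence `c` at `x`. -/
def Beval (c : ℕ → ℝ) (x : ℝ) : ℝ := ∑' n, c n * x ^ n

/-- Membership in `𝓑̃`: all coefficients lie in `D − D`. -/
def memBtilde (m : ℕ) (d : Fin m → ℝ) (c : ℕ → ℝ) : Prop :=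
  ∀ n, ∃ i j, c n = d i - d j

/-- Membership in `𝓑`: all coefficients lie in `D − D` and the constant term is nonzero. -/
def memB (m : ℕ) (d : Fin m → ℝ) (c : ℕ → ℝ) : Prop :=
  memBtilde m d c ∧ c 0 ≠ 0

/-- `χ = max_{i,j}|dᵢ − dⱼ| / min_{i≠j}|dᵢ − dⱼ|`. -/
def chi (m : ℕ) (d : Fin m → ℝ) : ℝ :=
  sSup {x | ∃ i j, x = |d i - d j|} / sInf {x | ∃ i j : Fin m, i ≠ j ∧ x = |d i - d j|}

def BddSeq (c : ℕ → ℝ) (C : ℝ) : Prop := ∀ n, |c n| ≤ C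

def shiftR (g : ℕ → ℝ) : ℕ → ℝ := fun n => match n with | 0 => 0 | Nat.succ m => g m

def LinF (a : ℝ) (g : ℕ → ℝ) : ℕ → ℝ := fun n => shiftR g n - a * g n

def Mop (a r : ℝ) (g : ℕ → ℝ) : ℕ → ℝ := fun n => r * g n - (a / r) * shiftR g n

def Nrm (r : ℝ) (g : ℕ → ℝ) : ℝ := ∑' n, g n ^ 2 * (r ^ 2) ^ n

lemma BddSeq.nonneg {c C} (h : BddSeq c C) : 0 ≤ C := le_trans (abs_nonneg _) (h 0)

lemma BddSeq.shiftR {c C} (h : BddSeq c C) : BddSeq (shiftR c) C := by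
  intro n; cases n with
  | zero => simpa [_root_.shiftR] using h.nonneg
  | succ m => simpa [_root_.shiftR] using h m

lemma BddSeq.linF {c C} (h : BddSeq c C) (a : ℝ) : BddSeq (LinF a c) (C + |a| * C) := by
  intro n
  refine le_trans (abs_sub _ _) ?_
  gcongr
  · exact h.shiftR n
  · rw [abs_mul]; gcongr; exact h n

lemma BddSeq.mop {c C} (h : BddSeq c C) (a r : ℝ) : BddSeq (Mop a r c) (|r| * C + |a/r| * C) := by
  intro n
  refine le_trans (abs_sub _ _) ?_
  gcongr
  · rw [abs_mul]; gcongr; exact h n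
  · rw [abs_mul]; gcongr; exact h.shiftR n

lemma summable_bdd_geom {f : ℕ → ℝ} {C s : ℝ} (hs0 : 0 ≤ s) (hs1 : s < 1)
    (h : ∀ n, |f n| ≤ C * s ^ n) : Summable f := by
  refine Summable.of_norm (Summable.of_nonneg_of_le (fun n => norm_nonneg _) (fun n => h n) ?_)
  exact (summable_geometric_of_lt_one hs0 hs1).mul_left C

section NrmId

variable {g : ℕ → ℝ} {C a r : ℝ}

lemma summable_sq (h : BddSeq g C) (hr0 : 0 < r) (hr1 : r < 1) :
    Summable (fun n => g n ^ 2 * (r ^ 2) ^ n) := by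
  refine summable_bdd_geom (C := C ^ 2) (s := r ^ 2) (by positivity) (by nlinarith)
    (fun n => ?_)
  have h1 : |g n| ^ 2 ≤ C ^ 2 := by nlinarith [h n, abs_nonneg (g n)]
  have h2 : (0:ℝ) ≤ (r^2)^n := by positivity
  calc |g n ^ 2 * (r^2)^n| = |g n|^2 * (r^2)^n := by
        rw [abs_mul, abs_pow, sq_abs, abs_pow, abs_of_nonneg (sq_nonneg r)]
    _ ≤ C^2 * (r^2)^n := by nlinarith

lemma summable_mixed {g' : ℕ → ℝ} {C' : ℝ} (h : BddSeq g C) (h' : BddSeq g' C')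
    (hr0 : 0 < r) (hr1 : r < 1) :
    Summable (fun n => g n * g' n * (r ^ 2) ^ n) := by
  refine summable_bdd_geom (C := C * C') (s := r ^ 2) (by positivity) (by nlinarith)
    (fun n => ?_)
  have h2 : (0:ℝ) ≤ (r^2)^n := by positivity
  rw [abs_mul, abs_mul, abs_pow, abs_of_nonneg (sq_nonneg r)]
  have key : |g n| * |g' n| ≤ C * C' :=
    mul_le_mul (h n) (h' n) (abs_nonneg _) ((abs_nonneg _).trans (h n))
  exact mul_le_mul_of_nonneg_right key h2

end NrmId

section Identity

variable {g : ℕ → ℝ} {C a r : ℝ}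

lemma tsum_shiftR_sq (h : BddSeq g C) (hr0 : 0 < r) (hr1 : r < 1) :
    ∑' n, (shiftR g n)^2 * (r^2)^n = r^2 * ∑' n, g n^2 * (r^2)^n := by
  rw [Summable.tsum_eq_zero_add (summable_sq h.shiftR hr0 hr1)]
  have e : ∀ n:ℕ, (shiftR g (n+1))^2 * (r^2)^(n+1) = r^2 * (g n^2 * (r^2)^n) := by
    intro n; simp only [shiftR, pow_succ]; ring
  rw [tsum_congr e, tsum_mul_left]
  simp [shiftR]

lemma Nrm_LinF_eq_Mop (h : BddSeq g C) (hr0 : 0 < r) (hr1 : r < 1) :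
    Nrm r (LinF a g) = Nrm r (Mop a r g) := by
  have hrne : r ≠ 0 := ne_of_gt hr0
  have hS : Summable (fun n => g n ^ 2 * (r^2)^n) := summable_sq h hr0 hr1
  have hSsh : Summable (fun n => (shiftR g n) ^ 2 * (r^2)^n) := summable_sq h.shiftR hr0 hr1
  have hT : Summable (fun n => shiftR g n * g n * (r^2)^n) := summable_mixed h.shiftR h hr0 hr1
  have e1 : Nrm r (LinF a g) = (∑' n, (shiftR g n)^2*(r^2)^n) +
      ((-2*a) * ∑' n, shiftR g n * g n * (r^2)^n + a^2 * ∑' n, g n^2*(r^2)^n) := by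
    rw [Nrm, ← tsum_mul_left, ← tsum_mul_left,
      ← Summable.tsum_add (hT.mul_left _) (hS.mul_left _),
      ← Summable.tsum_add hSsh ((hT.mul_left _).add (hS.mul_left _))]
    exact tsum_congr fun n => by simp only [LinF]; ring
  have e2 : Nrm r (Mop a r g) = (a^2/r^2) * (∑' n, (shiftR g n)^2*(r^2)^n) +
      ((-2*a) * ∑' n, shiftR g n * g n * (r^2)^n + r^2 * ∑' n, g n^2*(r^2)^n) := by
    rw [Nrm, ← tsum_mul_left, ← tsum_mul_left, ← tsum_mul_left,
      ← Summable.tsum_add (hT.mul_left _) (hS.mul_left _),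
      ← Summable.tsum_add (hSsh.mul_left _) ((hT.mul_left _).add (hS.mul_left _))]
    exact tsum_congr fun n => by simp only [Mop]; field_simp; ring
  rw [e1, e2, tsum_shiftR_sq h hr0 hr1]
  field_simp
  ring

lemma Mop_LinF_comm (a b r : ℝ) (g : ℕ → ℝ) : Mop a r (LinF b g) = LinF b (Mop a r g) := by
  funext n
  cases n with
  | zero => simp [Mop, LinF, shiftR]; ring
  | succ m => cases m with
    | zero => simp [Mop, LinF, shiftR]; ring
    | succ l => simp [Mop, LinF, shiftR]; ring

lemma Mop_foldr (a r : ℝ) : ∀ (L : List ℝ) (g : ℕ → ℝ),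
    Mop a r (L.foldr LinF g) = L.foldr LinF (Mop a r g) := by
  intro L
  induction L with
  | nil => intro g; rfl
  | cons b L' ih => intro g; simp only [List.foldr_cons, Mop_LinF_comm, ih]

lemma bdd_foldr : ∀ (L : List ℝ) (h : ℕ → ℝ) (C : ℝ), BddSeq h C →
    ∃ C', BddSeq (L.foldr LinF h) C' := by
  intro L
  induction L with
  | nil => intro h C hb; exact ⟨C, hb⟩
  | cons a L' ih =>
    intro h C hb
    obtain ⟨C', hC'⟩ := ih h C hb
    exact ⟨C' + |a| * C', by simpa using hC'.linF a⟩

lemma key_ineq {r : ℝ} (hr0 : 0 < r) (hr1 : r < 1) : ∀ (L : List ℝ) (h : ℕ → ℝ) (C : ℝ),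
    BddSeq h C → (∀ x ∈ L, x ≠ 0) →
    (L.foldr LinF h 0)^2 * ((L.map (fun x => (r/x)^2)).prod) ≤ Nrm r (L.foldr LinF h) := by
  intro L
  induction L with
  | nil =>
    intro h C hb _
    simp only [List.foldr_nil, List.map_nil, List.prod_nil, mul_one]
    have := Summable.le_tsum (summable_sq hb hr0 hr1) 0 (fun i _ => by positivity)
    simpa [Nrm] using this
  | cons a L' ih =>
    intro h C hb hne
    have hane : a ≠ 0 := hne a List.mem_cons_self
    set g := L'.foldr LinF h with hg
    obtain ⟨Cg, hCg⟩ := bdd_foldr L' h C hb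
    have IH := ih (Mop a r h) (|r| * C + |a/r| * C) (hb.mop a r)
      (fun x hx => hne x (List.mem_cons_of_mem a hx))
    rw [← Mop_foldr, ← hg] at IH
    have h0 : Mop a r g 0 = r * g 0 := by simp [Mop, shiftR]
    have h0' : (a :: L').foldr LinF h 0 = - (a * g 0) := by
      simp [List.foldr_cons, LinF, shiftR, hg]
    have hNrm : Nrm r (Mop a r g) = Nrm r ((a :: L').foldr LinF h) := by
      rw [List.foldr_cons, ← hg, Nrm_LinF_eq_Mop hCg hr0 hr1]
    calc ((a :: L').foldr LinF h 0)^2 * (((a :: L').map (fun x => (r/x)^2)).prod)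
        = (Mop a r g 0)^2 * ((L'.map (fun x => (r/x)^2)).prod) := by
          rw [h0, h0', List.map_cons, List.prod_cons]
          field_simp
      _ ≤ Nrm r (Mop a r g) := IH
      _ = Nrm r ((a :: L').foldr LinF h) := hNrm

end Identity


section Division

variable {c : ℕ → ℝ} {C a x : ℝ}

lemma summable_pow (h : BddSeq c C) (hx : |x| < 1) : Summable (fun n => c n * x ^ n) := by
  refine summable_bdd_geom (C := C) (s := |x|) (abs_nonneg x) hx (fun n => ?_)
  rw [abs_mul, abs_pow]
  exact mul_le_mul_of_nonneg_right (h n) (by positivity)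

lemma tsum_shiftR_pow (h : BddSeq c C) (hx : |x| < 1) :
    ∑' n, shiftR c n * x ^ n = x * ∑' n, c n * x ^ n := by
  rw [Summable.tsum_eq_zero_add (summable_pow h.shiftR hx)]
  have e : ∀ n:ℕ, shiftR c (n+1) * x^(n+1) = x * (c n * x^n) := by
    intro n; simp only [shiftR, pow_succ]; ring
  rw [tsum_congr e, tsum_mul_left]
  simp [shiftR]

lemma Beval_LinF (h : BddSeq c C) (hx : |x| < 1) :
    Beval (LinF a c) x = (x - a) * Beval c x := by
  have h1 : Summable (fun n => shiftR c n * x ^ n) := summable_pow h.shiftR hx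
  have h2 : Summable (fun n => a * (c n * x ^ n)) := (summable_pow h hx).mul_left a
  have e : Beval (LinF a c) x = (∑' n, shiftR c n * x ^ n) - ∑' n, a * (c n * x ^ n) := by
    rw [Beval, ← Summable.tsum_sub h1 h2]
    exact tsum_congr fun n => by simp only [LinF]; ring
  rw [e, tsum_shiftR_pow h hx, tsum_mul_left, Beval]
  ring

def Qdiv (c : ℕ → ℝ) (a : ℝ) : ℕ → ℝ := fun n => ∑' i, c (n + 1 + i) * a ^ i

lemma Qdiv_bdd (h : BddSeq c C) (ha0 : 0 ≤ a) (ha1 : a < 1) :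
    BddSeq (Qdiv c a) (C * (1 - a)⁻¹) := by
  intro n
  simp only [Qdiv]
  rw [← Real.norm_eq_abs]
  have hsm : Summable (fun i => c (n + 1 + i) * a ^ i) :=
    summable_bdd_geom (C := C) (s := a) ha0 ha1 (fun i => by
      rw [abs_mul, abs_pow, abs_of_nonneg ha0]
      exact mul_le_mul_of_nonneg_right (h _) (by positivity))
  have habs : Summable (fun i => |c (n + 1 + i) * a ^ i|) := hsm.abs
  refine le_trans (norm_tsum_le_tsum_norm (by simpa [abs_mul, abs_pow] using habs)) ?_
  have hb : ∀ i, |c (n + 1 + i) * a ^ i| ≤ C * a ^ i := fun i => by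
    rw [abs_mul, abs_pow, abs_of_nonneg ha0]
    exact mul_le_mul_of_nonneg_right (h _) (by positivity)
  calc (∑' i, ‖c (n + 1 + i) * a ^ i‖) ≤ ∑' i, C * a ^ i := by
        refine Summable.tsum_le_tsum (fun i => hb i) (by simpa [Real.norm_eq_abs, abs_mul, abs_pow] using habs) ?_
        exact (summable_geometric_of_lt_one ha0 ha1).mul_left C
    _ = C * (1 - a)⁻¹ := by rw [tsum_mul_left, tsum_geometric_of_lt_one ha0 ha1]

lemma LinF_Qdiv (h : BddSeq c C) (ha0 : 0 < a) (ha1 : a < 1)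
    (hroot : Beval c a = 0) : LinF a (Qdiv c a) = c := by
  have haabs : |a| < 1 := by rw [abs_of_pos ha0]; exact ha1
  have hsm : ∀ m : ℕ, Summable (fun i => c (m + i) * a ^ i) := by
    intro m
    refine summable_bdd_geom (C := C) (s := a) ha0.le ha1 (fun i => ?_)
    rw [abs_mul, abs_pow, abs_of_pos ha0]
    exact mul_le_mul_of_nonneg_right (h _) (by positivity)
  have step : ∀ m : ℕ, (∑' i, c (m + i) * a ^ i) = c m + a * ∑' i, c (m + 1 + i) * a ^ i := by
    intro m
    rw [Summable.tsum_eq_zero_add (hsm m)]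
    congr 1
    · simp
    · rw [tsum_mul_left.symm]
      exact tsum_congr fun i => by
        have : m + (i + 1) = m + 1 + i := by omega
        rw [this, pow_succ]
        ring
  funext n
  cases n with
  | zero =>
    have hBe : Beval c a = c 0 + a * ∑' i, c (0 + 1 + i) * a ^ i := by
      rw [Beval]
      have : ∀ n : ℕ, c n * a ^ n = c (0 + n) * a ^ n := fun n => by norm_num
      rw [tsum_congr this]
      exact step 0
    have : a * Qdiv c a 0 = - c 0 := by
      rw [Qdiv]
      have := hBe
      rw [hroot] at this
      linarith
    simp only [LinF, shiftR]
    linarith [this]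
  | succ n =>
    simp only [LinF, shiftR]
    have h1 : Qdiv c a n = c (n + 1) + a * Qdiv c a (n + 1) := by
      rw [Qdiv, Qdiv]
      exact step (n + 1)
    linarith [h1]

end Division

section Smooth

variable {c : ℕ → ℝ} {C : ℝ}

def Bfps (c : ℕ → ℝ) : FormalMultilinearSeries ℝ ℝ ℝ :=
  fun n => c n • ContinuousMultilinearMap.mkPiAlgebraFin ℝ n ℝ

lemma Bfps_norm (c : ℕ → ℝ) (n : ℕ) : ‖Bfps c n‖ = |c n| := by
  rw [Bfps]
  rw [norm_smul (c n) (ContinuousMultilinearMap.mkPiAlgebraFin ℝ n ℝ),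
    ContinuousMultilinearMap.norm_mkPiAlgebraFin, Real.norm_eq_abs, mul_one]

lemma Bfps_radius (h : BddSeq c C) : 1 ≤ (Bfps c).radius := by
  refine ENNReal.le_of_forall_nnreal_lt (fun ρ hρ => ?_)
  have hρ1 : (ρ : ℝ) < 1 := by exact_mod_cast hρ
  refine FormalMultilinearSeries.le_radius_of_bound _ C (fun n => ?_)
  rw [Bfps_norm]
  calc |c n| * (ρ:ℝ) ^ n ≤ C * 1 := by
        apply mul_le_mul (h n) _ (by positivity) h.nonneg
        exact pow_le_one₀ ρ.coe_nonneg hρ1.le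
    _ = C := mul_one C

lemma Bfps_sum (c : ℕ → ℝ) : (Bfps c).sum = Beval c := by
  funext x
  rw [FormalMultilinearSeries.sum, Beval]
  refine tsum_congr fun n => ?_
  rw [Bfps]
  simp [ContinuousMultilinearMap.mkPiAlgebraFin_apply, List.prod_ofFn, smul_eq_mul]

lemma Beval_contDiffOn (h : BddSeq c C) :
    ContDiffOn ℝ ⊤ (Beval c) (Set.Ioo (-1 : ℝ) 1) := by
  have hrad : 0 < (Bfps c).radius := lt_of_lt_of_le (by norm_num) (Bfps_radius h)
  have hball := (Bfps c).hasFPowerSeriesOnBall hrad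
  have han : AnalyticOnNhd ℝ (Beval c) (Metric.eball (0:ℝ) (Bfps c).radius) := by
    rw [← Bfps_sum]
    exact hball.analyticOnNhd
  have hsub : Set.Ioo (-1 : ℝ) 1 ⊆ Metric.eball (0:ℝ) (Bfps c).radius := by
    intro x hx
    rw [Metric.mem_eball, edist_dist, Real.dist_eq, sub_zero]
    refine lt_of_lt_of_le ?_ (Bfps_radius h)
    have hx1 : |x| < 1 := abs_lt.mpr ⟨hx.1, hx.2⟩
    rw [← ENNReal.ofReal_one]
    exact ENNReal.ofReal_lt_ofReal_iff_of_nonneg (abs_nonneg x) |>.mpr hx1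
  exact (han.mono hsub).contDiffOn (isOpen_Ioo.uniqueDiffOn)

lemma iDW_open {f : ℝ → ℝ} {U : Set ℝ} (hU : IsOpen U) {x : ℝ} (hx : x ∈ U) (n : ℕ) :
    iteratedDerivWithin n f U x = iteratedDeriv n f x := by
  rw [iteratedDerivWithin_eq_iteratedFDerivWithin, iteratedDeriv_eq_iteratedFDeriv,
    iteratedFDerivWithin_of_isOpen n hU hx]

end Smooth

section Transfer

variable {U : Set ℝ} {F : ℝ → ℝ} {a : ℝ}

lemma iDW_linmul (hU : IsOpen U) (hF : ContDiffOn ℝ ⊤ F U) (a : ℝ) :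
    ∀ (j : ℕ) {b : ℝ}, b ∈ U →
      iteratedDerivWithin j (fun x => (x - a) * F x) U b
        = (b - a) * iteratedDerivWithin j F U b
          + (j : ℝ) * iteratedDerivWithin (j - 1) F U b := by
  have hud : UniqueDiffOn ℝ U := hU.uniqueDiffOn
  intro j
  induction j with
  | zero =>
    intro b hb
    simp [iteratedDerivWithin_zero]
  | succ j ih =>
    intro b hb
    have hudb : UniqueDiffWithinAt ℝ U b := hud b hb
    rw [iteratedDerivWithin_succ]
    have heq : Set.EqOn (iteratedDerivWithin j (fun x => (x - a) * F x) U)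
        (fun x => (x - a) * iteratedDerivWithin j F U x
          + (j:ℝ) * iteratedDerivWithin (j-1) F U x) U := fun x hx => ih hx
    rw [derivWithin_congr heq (heq hb)]
    have hdiffj : DifferentiableWithinAt ℝ (iteratedDerivWithin j F U) U b :=
      (hF.differentiableOn_iteratedDerivWithin (m := j)
        (by exact_mod_cast lt_top_iff_ne_top.mpr (by simp)) hud) b hb
    have hdiffj1 : DifferentiableWithinAt ℝ (iteratedDerivWithin (j-1) F U) U b :=
      (hF.differentiableOn_iteratedDerivWithin (m := j-1)
        (by exact_mod_cast lt_top_iff_ne_top.mpr (by simp)) hud) b hb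
    have hdl : DifferentiableWithinAt ℝ (fun x : ℝ => x - a) U b :=
      (differentiableWithinAt_id.sub_const a)
    rw [derivWithin_fun_add (f := fun x => (x - a) * iteratedDerivWithin j F U x) (hdl.mul hdiffj) (hdiffj1.const_mul _)]
    rw [derivWithin_fun_mul hdl hdiffj]
    rw [derivWithin_const_mul _ hdiffj1]
    have e1 : derivWithin (fun x : ℝ => x - a) U b = 1 := by
      rw [derivWithin_of_isOpen hU hb]
      simp
    have e2 : derivWithin (iteratedDerivWithin j F U) U b
        = iteratedDerivWithin (j+1) F U b := (congrFun iteratedDerivWithin_succ b).symm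
    rw [e1, e2]
    cases j with
    | zero => simp [iteratedDerivWithin_succ]; ring
    | succ s =>
      have e3 : derivWithin (iteratedDerivWithin (s+1-1) F U) U b
          = iteratedDerivWithin (s+1) F U b := by
        simp only [Nat.add_sub_cancel]
        exact (congrFun iteratedDerivWithin_succ b).symm
      rw [e3]
      push_cast
      ring

lemma transfer_same (hU : IsOpen U) (hF : ContDiffOn ℝ ⊤ F U) (ha : a ∈ U) (m : ℕ)
    (h : ∀ j < m, iteratedDerivWithin j (fun x => (x - a) * F x) U a = 0) :
    ∀ j, j + 1 < m → iteratedDerivWithin j F U a = 0 := by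
  intro j hj
  have := h (j+1) hj
  rw [iDW_linmul hU hF a (j+1) ha] at this
  simp only [sub_self, zero_mul, zero_add, Nat.add_sub_cancel] at this
  have hcoef : ((j:ℝ) + 1) ≠ 0 := by positivity
  have : ((j:ℝ) + 1) * iteratedDerivWithin j F U a = 0 := by push_cast at this ⊢; linarith
  exact (mul_eq_zero.mp this).resolve_left hcoef

lemma transfer_other (hU : IsOpen U) (hF : ContDiffOn ℝ ⊤ F U) {b : ℝ} (hb : b ∈ U)
    (hba : b ≠ a) (m : ℕ)
    (h : ∀ j < m, iteratedDerivWithin j (fun x => (x - a) * F x) U b = 0) :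
    ∀ j, j < m → iteratedDerivWithin j F U b = 0 := by
  intro j
  induction j using Nat.strong_induction_on with
  | _ j ih =>
    intro hj
    have h0 := h j hj
    rw [iDW_linmul hU hF a j hb] at h0
    have hterm : (j:ℝ) * iteratedDerivWithin (j - 1) F U b = 0 := by
      cases j with
      | zero => simp
      | succ s =>
        have := ih s (by omega) (by omega)
        simp only [Nat.add_sub_cancel]
        rw [this]; ring
    rw [hterm, add_zero] at h0
    rcases mul_eq_zero.mp h0 with h1 | h1
    · exact absurd (sub_eq_zero.mp h1) hba
    · exact h1

end Transfer

lemma fact_div : ∀ (L : List ℝ) (c : ℕ → ℝ) (C : ℝ), BddSeq c C →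
    (∀ a ∈ L, 0 < a ∧ a < 1) →
    (∀ a ∈ L, ∀ j, j < L.count a → iteratedDeriv j (Beval c) a = 0) →
    ∃ h C', BddSeq h C' ∧ L.foldr LinF h = c := by
  intro L
  induction L with
  | nil => intro c C hb _ _; exact ⟨c, C, hb, rfl⟩
  | cons a L' ih =>
    intro c C hb hmem hvan
    obtain ⟨ha0, ha1⟩ := hmem a List.mem_cons_self
    have hroot : Beval c a = 0 := by
      have h0 := hvan a List.mem_cons_self 0 (by simp [List.count_cons_self])
      simpa using h0
    set q := Qdiv c a with hqdef
    have hqb : BddSeq q (C * (1-a)⁻¹) := Qdiv_bdd hb ha0.le ha1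
    have hLq : LinF a q = c := LinF_Qdiv hb ha0 ha1 hroot
    set U := Set.Ioo (-1:ℝ) 1 with hUdef
    have hUo : IsOpen U := isOpen_Ioo
    have hFq : ContDiffOn ℝ ⊤ (Beval q) U := Beval_contDiffOn hqb
    have haU : a ∈ U := ⟨by linarith, ha1⟩
    have hEq : Set.EqOn (Beval c) (fun x => (x - a) * Beval q x) U := by
      intro x hx
      rw [← hLq]
      exact Beval_LinF hqb (abs_lt.mpr ⟨hx.1, hx.2⟩)
    have hvanW : ∀ b ∈ (a :: L'), ∀ j, j < (a :: L').count b →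
        iteratedDerivWithin j (fun x => (x - a) * Beval q x) U b = 0 := by
      intro b hbmem j hj
      have hbU : b ∈ U := by
        obtain ⟨h0, h1⟩ := hmem b hbmem; exact ⟨by linarith, h1⟩
      rw [← iteratedDerivWithin_congr hEq hbU, iDW_open hUo hbU]
      exact hvan b hbmem j hj
    have hvanq : ∀ b ∈ L', ∀ j, j < L'.count b → iteratedDeriv j (Beval q) b = 0 := by
      intro b hbmem j hj
      have hbU : b ∈ U := by
        obtain ⟨h0, h1⟩ := hmem b (List.mem_cons_of_mem a hbmem); exact ⟨by linarith, h1⟩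
      rw [← iDW_open hUo hbU]
      by_cases hba : b = a
      · subst hba
        exact transfer_same hUo hFq hbU (List.count b (b :: L'))
          (fun j' hj' => hvanW b List.mem_cons_self j' hj') j
          (by rw [List.count_cons_self]; omega)
      · exact transfer_other hUo hFq hbU hba (List.count b (a :: L'))
          (fun j' hj' => hvanW b (List.mem_cons_of_mem a hbmem) j' hj') j
          (by rw [List.count_cons_of_ne (Ne.symm hba)]; omega)
    obtain ⟨h, C', hbh, hfold⟩ := ih q _ hqb
      (fun b hbm => hmem b (List.mem_cons_of_mem a hbm)) hvanq
    exact ⟨h, C', hbh, by rw [List.foldr_cons, hfold, hLq]⟩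

section ListAux

lemma list_prod_sq (r : ℝ) : ∀ L : List ℝ,
    (L.map (fun x => (r/x)^2)).prod = ((L.map (fun x => r/x)).prod)^2 := by
  intro L
  induction L with
  | nil => simp
  | cons a L' ih => simp [ih, mul_pow]

lemma list_prod_div (r : ℝ) : ∀ L : List ℝ, (∀ x ∈ L, x ≠ 0) →
    (L.map (fun x => r/x)).prod * L.prod = r ^ L.length := by
  intro L
  induction L with
  | nil => simp
  | cons a L' ih =>
    intro hne
    have ha : a ≠ 0 := hne a List.mem_cons_self
    have := ih (fun x hx => hne x (List.mem_cons_of_mem a hx))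
    simp only [List.map_cons, List.prod_cons, List.length_cons]
    field_simp
    rw [pow_succ]
    linear_combination r * this

lemma list_prod_pos : ∀ L : List ℝ, (∀ x ∈ L, 0 < x) → 0 < L.prod := by
  intro L
  induction L with
  | nil => simp
  | cons a L' ih =>
    intro hp
    simp only [List.prod_cons]
    exact mul_pos (hp a List.mem_cons_self)
      (ih fun x hx => hp x (List.mem_cons_of_mem a hx))

end ListAux

set_option maxHeartbeats 2000000 in
/-- If `0 < α₁ ≤ … ≤ α_k` are roots of `f ∈ 𝓑` counted with multiplicity
(multiplicity expressed through vanishing of iterated derivatives), then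
`∏ αᵢ ≥ (1 + 1/k)^{−k/2} (χ²k + 1)^{−1/2}`. -/
theorem product_of_roots_lower_bound
    (m : ℕ) (hm : 2 ≤ m) (d : Fin m → ℝ) (hd0 : d ⟨0, by omega⟩ = 0) (hd : StrictMono d)
    (c : ℕ → ℝ) (hc : memB m d c)
    (k : ℕ) (hk : 0 < k) (α : Fin k → ℝ)
    (hmono : Monotone α) (hpos : ∀ i, 0 < α i)
    (hroots : ∀ i : Fin k, ∀ j : ℕ,
      j < (Finset.univ.filter fun i' : Fin k => α i' = α i).card →
        iteratedDeriv j (Beval c) (α i) = 0) :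
    (1 + 1 / (k : ℝ)) ^ (-(k : ℝ) / 2) * (chi m d ^ 2 * (k : ℝ) + 1) ^ (-(1 : ℝ) / 2)
      ≤ ∏ i, α i := by
  classical
  obtain ⟨hBt, hc0⟩ := hc
  set Δ := sSup {x | ∃ i j, x = |d i - d j|} with hΔdef
  set δ := sInf {x | ∃ i j : Fin m, i ≠ j ∧ x = |d i - d j|} with hδdef
  have hchi : chi m d = Δ / δ := rfl
  have hS1fin : Set.Finite {x | ∃ i j, x = |d i - d j|} := by
    refine Set.Finite.subset (Set.finite_range (fun p : Fin m × Fin m => |d p.1 - d p.2|)) ?_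
    rintro x ⟨i, j, rfl⟩; exact ⟨(i, j), rfl⟩
  have hS2fin : Set.Finite {x | ∃ i j : Fin m, i ≠ j ∧ x = |d i - d j|} := by
    refine Set.Finite.subset (Set.finite_range (fun p : Fin m × Fin m => |d p.1 - d p.2|)) ?_
    rintro x ⟨i, j, hij, rfl⟩; exact ⟨(i, j), rfl⟩
  have hΔub : ∀ i j, |d i - d j| ≤ Δ := fun i j => le_csSup hS1fin.bddAbove ⟨i, j, rfl⟩
  have hbddc : BddSeq c Δ := by
    intro n; obtain ⟨i, j, hij⟩ := hBt n; rw [hij]; exact hΔub i j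
  have hS2ne : Set.Nonempty {x | ∃ i j : Fin m, i ≠ j ∧ x = |d i - d j|} := by
    refine ⟨|d ⟨0, by omega⟩ - d ⟨1, by omega⟩|, ⟨0, by omega⟩, ⟨1, by omega⟩, ?_, rfl⟩
    simp [Fin.ext_iff]
  have hδmem := hS2ne.csInf_mem hS2fin
  have hδpos : 0 < δ := by
    obtain ⟨i, j, hij, he⟩ := hδmem
    rw [hδdef, he]
    exact abs_pos.mpr (sub_ne_zero.mpr (fun hh => hij (hd.injective hh)))
  have hδle : δ ≤ |c 0| := by
    obtain ⟨i, j, hij⟩ := hBt 0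
    have hijne : i ≠ j := by rintro rfl; exact hc0 (by simp [hij])
    rw [hij]; exact csInf_le hS2fin.bddBelow ⟨i, j, hijne, rfl⟩
  have hΔpos : 0 < Δ := lt_of_lt_of_le hδpos (le_trans hδle (hbddc 0))
  have hkpos : (0:ℝ) < k := by exact_mod_cast hk
  set y : ℝ := (k:ℝ)/((k:ℝ)+1) with hydef
  have hy0 : 0 < y := by positivity
  have hy1 : y < 1 := by rw [hydef, div_lt_one (by positivity)]; linarith
  set r := Real.sqrt y with hrdef
  have hr0 : 0 < r := Real.sqrt_pos.mpr hy0
  have hr2 : r ^ 2 = y := Real.sq_sqrt hy0.le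
  have hr1 : r < 1 := by nlinarith [hr2, hr0]
  set S := Finset.univ.filter (fun i : Fin k => α i < r) with hSdef
  set T := Finset.univ.filter (fun i : Fin k => ¬ α i < r) with hTdef
  set L := (Multiset.map α S.val).toList with hLdef
  have hLmem : ∀ a ∈ L, ∃ i, i ∈ S ∧ α i = a := by
    intro a ha
    rw [hLdef, Multiset.mem_toList, Multiset.mem_map] at ha
    obtain ⟨i, hi, he⟩ := ha
    exact ⟨i, hi, he⟩
  have hLpos : ∀ a ∈ L, 0 < a ∧ a < r := by
    intro a ha
    obtain ⟨i, hiS, he⟩ := hLmem a ha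
    rw [← he]
    exact ⟨hpos i, (Finset.mem_filter.mp hiS).2⟩
  have hvanL : ∀ a ∈ L, ∀ j, j < L.count a → iteratedDeriv j (Beval c) a = 0 := by
    intro a ha j hj
    obtain ⟨i, hiS, he⟩ := hLmem a ha
    subst he
    have hcount : L.count (α i) ≤ (Finset.univ.filter fun i' : Fin k => α i' = α i).card := by
      have e1 : L.count (α i) = Multiset.count (α i) (Multiset.map α S.val) := by
        rw [hLdef, ← Multiset.coe_count, Multiset.coe_toList]
      rw [e1, Multiset.count_map]
      have e2 : Multiset.filter (fun x => α i = α x) S.val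
          = (S.filter (fun x => α i = α x)).val := (Finset.filter_val _ _).symm
      rw [e2]
      show (S.filter (fun x => α i = α x)).card ≤ _
      apply Finset.card_le_card
      intro x hx
      rw [Finset.mem_filter] at hx ⊢
      exact ⟨Finset.mem_univ x, hx.2.symm⟩
    exact hroots i j (lt_of_lt_of_le hj hcount)
  obtain ⟨h, C', hbh, hfold⟩ := fact_div L c Δ hbddc
    (fun a ha => ⟨(hLpos a ha).1, lt_trans (hLpos a ha).2 hr1⟩) hvanL
  have hkey := key_ineq hr0 hr1 L h C' hbh (fun x hx => ne_of_gt (hLpos x hx).1)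
  rw [hfold] at hkey
  have hsq := summable_sq hbddc hr0 hr1
  have hk1 : ((k:ℝ)+1) ≠ 0 := by positivity
  have hyk : r^2 * (1 - r^2)⁻¹ = (k:ℝ) := by
    rw [hr2, hydef]
    have e : 1 - (k:ℝ)/((k:ℝ)+1) = 1/((k:ℝ)+1) := by field_simp; ring
    rw [e]
    field_simp
  have hNrm : Nrm r c ≤ (c 0)^2 + Δ^2 * k := by
    rw [Nrm, Summable.tsum_eq_zero_add hsq]
    simp only [pow_zero, mul_one]
    have hsum1 : Summable (fun n => c (n+1)^2 * (r^2)^(n+1)) :=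
      (summable_nat_add_iff 1).mpr hsq
    have hgeo : Summable (fun n : ℕ => (r^2)^n) :=
      summable_geometric_of_lt_one (by positivity) (by nlinarith)
    have hsum2 : Summable (fun n : ℕ => Δ^2 * (r^2)^(n+1)) := by
      refine (hgeo.mul_left (Δ^2 * r^2)).congr (fun n => ?_)
      rw [pow_succ]; ring
    have hb1 : ∑' n, c (n+1)^2 * (r^2)^(n+1) ≤ ∑' n, Δ^2 * (r^2)^(n+1) := by
      refine Summable.tsum_le_tsum (fun n => ?_) hsum1 hsum2
      have : c (n+1)^2 ≤ Δ^2 := by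
        rw [← sq_abs]
        exact pow_le_pow_left₀ (abs_nonneg _) (hbddc _) 2
      exact mul_le_mul_of_nonneg_right this (by positivity)
    have hb2 : ∑' n, Δ^2 * (r^2)^(n+1) = Δ^2 * (k:ℝ) := by
      have e : ∀ n : ℕ, Δ^2 * (r^2)^(n+1) = (Δ^2 * r^2) * (r^2)^n := fun n => by
        rw [pow_succ]; ring
      rw [tsum_congr e, tsum_mul_left, tsum_geometric_of_lt_one (by positivity) (by nlinarith)]
      rw [mul_assoc, hyk]
    linarith [hb1, hb2]
  set P := (L.map (fun x => (r/x)^2)).prod with hPdef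
  have hc0sq : δ^2 ≤ (c 0)^2 := by nlinarith [hδle, abs_nonneg (c 0), sq_abs (c 0)]
  have hc0pos : 0 < (c 0)^2 := lt_of_lt_of_le (by positivity) hc0sq
  set Q := (L.map (fun x => r/x)).prod with hQdef
  have hQP : P = Q^2 := list_prod_sq r L
  have hP0 : 0 ≤ P := by rw [hQP]; positivity
  have h1 : (c 0)^2 * P ≤ (c 0)^2 + Δ^2 * k := le_trans hkey hNrm
  have hPle : P ≤ (Δ/δ)^2 * k + 1 := by
    have hfinal : P * (δ^2*(c 0)^2) ≤ ((Δ/δ)^2 * k + 1) * (δ^2*(c 0)^2) := by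
      have e : ((Δ/δ)^2 * k + 1) * (δ^2*(c 0)^2) = (Δ^2*k + δ^2)*(c 0)^2 := by
        field_simp
      rw [e]
      nlinarith [mul_le_mul_of_nonneg_right h1 (sq_nonneg δ),
        mul_le_mul_of_nonneg_left hc0sq (show (0:ℝ) ≤ Δ^2*k by positivity)]
    exact le_of_mul_le_mul_right hfinal (by positivity)
  have hLprodpos : 0 < L.prod := list_prod_pos L (fun x hx => (hLpos x hx).1)
  have hQprod : Q * L.prod = r ^ L.length := list_prod_div r L
    (fun x hx => ne_of_gt (hLpos x hx).1)
  have hQpos : 0 < Q := by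
    have hrp : (0:ℝ) < r ^ L.length := by positivity
    nlinarith [hQprod, hLprodpos]
  set s := Real.sqrt ((Δ/δ)^2 * k + 1) with hsdef
  have hargpos : (0:ℝ) < (Δ/δ)^2 * k + 1 := by positivity
  have hspos : 0 < s := Real.sqrt_pos.mpr hargpos
  have hs2 : s^2 = (Δ/δ)^2*k+1 := Real.sq_sqrt hargpos.le
  have hQs : Q ≤ s := by
    have hQ2 : Q^2 ≤ s^2 := by rw [hs2, ← hQP]; exact hPle
    calc Q = Real.sqrt (Q^2) := (Real.sqrt_sq hQpos.le).symm
      _ ≤ Real.sqrt (s^2) := Real.sqrt_le_sqrt hQ2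
      _ = s := Real.sqrt_sq hspos.le
  have hLprod_ge : r ^ L.length ≤ s * L.prod := by
    calc r ^ L.length = Q * L.prod := hQprod.symm
      _ ≤ s * L.prod := mul_le_mul_of_nonneg_right hQs hLprodpos.le
  have hsplit : (∏ i, α i) = (∏ i ∈ S, α i) * (∏ i ∈ T, α i) :=
    (Finset.prod_filter_mul_prod_filter_not Finset.univ _ _).symm
  have hSprod : (∏ i ∈ S, α i) = L.prod := by
    rw [hLdef, Multiset.prod_toList, Finset.prod_eq_multiset_prod]
  have hTprod : r ^ T.card ≤ ∏ i ∈ T, α i := by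
    calc r ^ T.card = ∏ _i ∈ T, r := (Finset.prod_const r).symm
      _ ≤ ∏ i ∈ T, α i := Finset.prod_le_prod (fun i _ => hr0.le)
          (fun i hi => le_of_not_gt (Finset.mem_filter.mp hi).2)
  have hcards : L.length = S.card := by
    rw [hLdef, Multiset.length_toList, Multiset.card_map]
    rfl
  have hcardk : S.card + T.card = k := by
    have h3 := Finset.card_filter_add_card_filter_not
      (s := (Finset.univ : Finset (Fin k))) (p := fun i : Fin k => α i < r)
    rw [Finset.card_univ, Fintype.card_fin] at h3
    convert h3 using 3
  have hmain : r ^ k * s⁻¹ ≤ ∏ i, α i := by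
    have h2 : r ^ k = r ^ L.length * r ^ T.card := by rw [← pow_add, hcards, hcardk]
    rw [hsplit, hSprod, h2]
    have bound1 : r ^ L.length * s⁻¹ ≤ L.prod := by
      have := mul_le_mul_of_nonneg_right hLprod_ge (inv_nonneg.mpr hspos.le)
      have e : s * L.prod * s⁻¹ = L.prod := by field_simp
      linarith [e ▸ this]
    calc r ^ L.length * r ^ T.card * s⁻¹ = (r ^ L.length * s⁻¹) * r ^ T.card := by ring
      _ ≤ L.prod * (∏ i ∈ T, α i) := by
          refine mul_le_mul bound1 hTprod (by positivity) hLprodpos.le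
  have hA : (1 + 1/(k:ℝ)) ^ (-(k:ℝ)/2) = r ^ k := by
    have hyinv : 1 + 1/(k:ℝ) = y⁻¹ := by rw [hydef]; field_simp
    rw [hyinv]
    rw [Real.inv_rpow hy0.le, ← Real.rpow_neg hy0.le, neg_div, neg_neg]
    rw [hrdef, Real.sqrt_eq_rpow, ← Real.rpow_natCast (y ^ ((1:ℝ)/2)) k,
      ← Real.rpow_mul hy0.le]
    congr 1
    ring
  have hB : ((Δ/δ)^2 * (k:ℝ) + 1) ^ (-(1:ℝ)/2) = s⁻¹ := by
    rw [hsdef, Real.sqrt_eq_rpow, neg_div, Real.rpow_neg hargpos.le]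
  calc (1 + 1 / (k : ℝ)) ^ (-(k : ℝ) / 2) * (chi m d ^ 2 * (k : ℝ) + 1) ^ (-(1 : ℝ) / 2)
      = r ^ k * s⁻¹ := by rw [hchi, hA, hB]
    _ ≤ ∏ i, α i := hmain
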